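/- Let z be a nonzero Gaussian integer, u a unit of ℤ[i], and v a Gaussian integer. Let r be the unique remainder of v modulo z lying in 𝓕(z), and let r' be the unique remainder of v modulo uz lying in 𝓕(uz). If r ∈ 𝓕°(z), then r' = r. -/

import Mathlib

/-- The fundamental domain `𝓕(z)` of a Gaussian integer `z`:
the semi-open square `{ z(α + βi) : -1/2 < α ≤ 1/2, -1/2 < β ≤ 1/2 }` in `ℂ`. -/
def Fd (z : GaussianInt) : Set ℂ :=
  { w | ∃ α β : ℝ, w = (GaussianInt.toComplex z) * (α + β * Complex.I) ∧
      -(1/2 : ℝ) < α ∧ α ≤ 1/2 ∧ -(1/2 : ℝ) < β ∧ β ≤ 1/2 }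

/-- The strict fundamental domain `𝓕°(z)` of a Gaussian integer `z`:
the open square `{ z(α + βi) : -1/2 < α < 1/2, -1/2 < β < 1/2 }` in `ℂ`. -/
def FdO (z : GaussianInt) : Set ℂ :=
  { w | ∃ α β : ℝ, w = (GaussianInt.toComplex z) * (α + β * Complex.I) ∧
      -(1/2 : ℝ) < α ∧ α < 1/2 ∧ -(1/2 : ℝ) < β ∧ β < 1/2 }

/-- If the remainder `r` of `v` modulo `z` lying in `𝓕(z)` in fact lies in the strict
fundamental domain `𝓕°(z)`, then the remainder `r'` of `v` modulo `u * z` lying in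
`𝓕(u * z)` (for `u` a unit) equals `r`. -/
theorem mod_unit_mul_eq (z u v r r' : GaussianInt) (hz : z ≠ 0) (hu : IsUnit u)
    (hr : GaussianInt.toComplex r ∈ Fd z) (hdvd : z ∣ v - r)
    (hr' : GaussianInt.toComplex r' ∈ Fd (u * z)) (hdvd' : u * z ∣ v - r')
    (hro : GaussianInt.toComplex r ∈ FdO z) :
    r' = r := by
  obtain ⟨α', β', h1', h2', h3', h4', h5'⟩ := hr'
  obtain ⟨α, β, h1, h2, h3, h4, h5⟩ := hro
  have hzdvd : z ∣ r' - r := by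
    have hz2 : z ∣ v - r' := dvd_trans (dvd_mul_left z u) hdvd'
    have := dvd_sub hdvd hz2
    simpa using this
  obtain ⟨k, hk⟩ := hzdvd
  have hzc : (GaussianInt.toComplex z) ≠ 0 := by
    simpa using hz
  have hkc : (GaussianInt.toComplex k)
      = (GaussianInt.toComplex u) * ((α' : ℂ) + β' * Complex.I) - ((α : ℂ) + β * Complex.I) := by
    have h := congrArg GaussianInt.toComplex hk
    rw [GaussianInt.toComplex_sub, GaussianInt.toComplex_mul] at h
    rw [h1', h1, GaussianInt.toComplex_mul] at h
    apply mul_left_cancel₀ hzc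
    linear_combination -h
  rw [GaussianInt.toComplex_def u, GaussianInt.toComplex_def k] at hkc
  have hre : (k.re : ℝ) = (u.re : ℝ) * α' - (u.im : ℝ) * β' - α := by
    have h := congrArg Complex.re hkc
    simp [Complex.add_re, Complex.sub_re, Complex.mul_re, -GaussianInt.intCast_re, -GaussianInt.intCast_im] at h
    linear_combination h
  have him : (k.im : ℝ) = (u.im : ℝ) * α' + (u.re : ℝ) * β' - β := by
    have h := congrArg Complex.im hkc
    simp [Complex.add_im, Complex.sub_im, Complex.mul_im, -GaussianInt.intCast_re, -GaussianInt.intCast_im] at h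
    linear_combination h
  -- classify the unit u
  have hnorm : u.norm = 1 := (Zsqrtd.norm_eq_one_iff' (by norm_num) u).2 hu
  have hsq : u.re * u.re + u.im * u.im = 1 := by
    have h := hnorm
    simp [Zsqrtd.norm] at h
    linarith
  have hb1 : -1 ≤ u.re := by nlinarith [mul_self_nonneg u.im, mul_self_nonneg (u.re + 1)]
  have hb2 : u.re ≤ 1 := by nlinarith [mul_self_nonneg u.im, mul_self_nonneg (u.re - 1)]
  have hb3 : -1 ≤ u.im := by nlinarith [mul_self_nonneg u.re, mul_self_nonneg (u.im + 1)]
  have hb4 : u.im ≤ 1 := by nlinarith [mul_self_nonneg u.re, mul_self_nonneg (u.im - 1)]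
  have hcases : (u.re = 1 ∧ u.im = 0) ∨ (u.re = -1 ∧ u.im = 0) ∨
      (u.re = 0 ∧ u.im = 1) ∨ (u.re = 0 ∧ u.im = -1) := by
    interval_cases h : u.re <;> interval_cases h2 : u.im <;> omega
  have hkre : |(k.re : ℝ)| < 1 ∧ |(k.im : ℝ)| < 1 := by
    rcases hcases with ⟨h6, h7⟩ | ⟨h6, h7⟩ | ⟨h6, h7⟩ | ⟨h6, h7⟩ <;>
      rw [h6, h7] at hre him <;> push_cast at hre him <;>
      exact ⟨abs_lt.2 ⟨by linarith, by linarith⟩, abs_lt.2 ⟨by linarith, by linarith⟩⟩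
  have hzero : k = 0 := by
    have h6 : |k.re| < 1 := by exact_mod_cast hkre.1
    have h7 : |k.im| < 1 := by exact_mod_cast hkre.2
    rw [abs_lt] at h6 h7
    have h8 : k.re = 0 := by omega
    have h9 : k.im = 0 := by omega
    ext <;> simp [h8, h9]
  rw [hzero, mul_zero, sub_eq_zero] at hk
  exact hk
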